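/- Let X be a graph satisfying the self-centered condition, v_0 a base point with all P_{i,j}^k well-defined, and suppose the convolution R_i ∘ R_j = Σ_k P_{i,j}^k R_k satisfies R_i ∘ R_j = R_j ∘ R_i and (R_1 ∘ R_i) ∘ R_j = R_1 ∘ (R_i ∘ R_j) for all i, j. Then the convolution is associative on all basis elements: (R_h ∘ R_i) ∘ R_j = R_h ∘ (R_i ∘ R_j) for all h, i, j. -/

import Mathlib

open scoped BigOperators

variable {V : Type*}

/-- The sphere of radius `i` around `v`: vertices at graph distance exactly `i`. -/
def SimpleGraph.gsphere (G : SimpleGraph V) (v : V) (i : ℕ) : Set V :=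
  {w : V | G.dist v w = i}

/-- The random-walk coefficient
`P_{i,j}^k = (1/|Γ_i(v₀)|) Σ_{v ∈ Γ_i(v₀)} |Γ_j(v) ∩ Γ_k(v₀)| / |Γ_j(v)|`. -/
noncomputable def SimpleGraph.rwCoeff (G : SimpleGraph V) (v₀ : V) (i j k : ℕ) : ℝ :=
  (1 / ((G.gsphere v₀ i).ncard : ℝ)) *
    ∑ᶠ v ∈ G.gsphere v₀ i,
      (((G.gsphere v j ∩ G.gsphere v₀ k).ncard : ℝ) / ((G.gsphere v j).ncard : ℝ))

/-- The eccentricity of a vertex: the supremum of distances to other vertices. -/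
noncomputable def SimpleGraph.eccent' (G : SimpleGraph V) (v : V) : ℕ :=
  ⨆ w : V, G.dist v w

/-- The self-centered condition: the graph is either infinite, or finite with all
eccentricities equal (i.e. equal to the radius). -/
def SimpleGraph.SelfCenteredCond (G : SimpleGraph V) : Prop :=
  Infinite V ∨ (Finite V ∧ ∀ v w : V, G.eccent' v = G.eccent' w)

section Aux

variable {V : Type*} {G : SimpleGraph V}

lemma aux_exists_dist_one_adj (hc : G.Connected) {v w : V} {n : ℕ} (h : G.dist v w = n + 1) :
    ∃ u, G.dist v u = 1 ∧ G.dist u w = n := by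
  obtain ⟨p, hp⟩ := hc.exists_walk_length_eq_dist v w
  rw [h] at hp
  cases p with
  | nil => simp at hp
  | @cons _ u _ ha q =>
    refine ⟨u, (G.dist_eq_one_iff_adj).mpr ha, le_antisymm ?_ ?_⟩
    · have : q.length = n := by simpa using hp
      simpa [this] using G.dist_le q
    · have htri := hc.dist_triangle (u := v) (v := u) (w := w)
      have h1 : G.dist v u ≤ 1 := G.dist_le (SimpleGraph.Walk.cons ha SimpleGraph.Walk.nil)
      omega

lemma aux_exists_dist_adj (hc : G.Connected) {v w : V} {n : ℕ} (h : G.dist v w = n + 1) :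
    ∃ u, G.dist v u = n ∧ G.Adj u w := by
  rw [G.dist_comm] at h
  obtain ⟨u, hu1, hun⟩ := aux_exists_dist_one_adj hc h
  exact ⟨u, by rwa [G.dist_comm], (G.dist_eq_one_iff_adj).mp hu1 |>.symm⟩

lemma aux_ball_finite (hc : G.Connected) (hlf : ∀ v : V, (G.neighborSet v).Finite) (v : V) :
    ∀ n : ℕ, {w : V | G.dist v w ≤ n}.Finite := by
  intro n
  induction n with
  | zero =>
    refine Set.Finite.subset (Set.finite_singleton v) ?_
    intro w hw
    simp only [Set.mem_setOf_eq, Nat.le_zero] at hw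
    exact (hc.dist_eq_zero_iff.mp hw).symm
  | succ n ih =>
    refine Set.Finite.subset (ih.union (Set.Finite.biUnion ih (fun u _ => hlf u))) ?_
    intro w hw
    simp only [Set.mem_setOf_eq] at hw
    rcases Nat.lt_or_ge (G.dist v w) (n + 1) with hlt | hge
    · exact Or.inl (by simpa using Nat.lt_succ_iff.mp hlt)
    · have heq : G.dist v w = n + 1 := le_antisymm hw hge
      obtain ⟨u, hun, hadj⟩ := aux_exists_dist_adj hc heq
      exact Or.inr (Set.mem_biUnion (show u ∈ {w : V | G.dist v w ≤ n} by simp [hun]) hadj)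

lemma aux_gsphere_finite (hc : G.Connected) (hlf : ∀ v : V, (G.neighborSet v).Finite)
    (v : V) (i : ℕ) : (G.gsphere v i).Finite :=
  (aux_ball_finite hc hlf v i).subset
    (fun w hw => by simp [SimpleGraph.gsphere] at hw ⊢; omega)

lemma aux_mem_gsphere {v w : V} {i : ℕ} : w ∈ G.gsphere v i ↔ G.dist v w = i := Iff.rfl

lemma aux_rwCoeff_eq_zero_of_inter (v₀ : V) {i j k : ℕ}
    (h : ∀ v ∈ G.gsphere v₀ i, G.gsphere v j ∩ G.gsphere v₀ k = ∅) :
    G.rwCoeff v₀ i j k = 0 := by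
  unfold SimpleGraph.rwCoeff
  rw [finsum_mem_of_eqOn_zero (fun v hv => by rw [h v hv]; simp), mul_zero]

lemma aux_rwCoeff_eq_zero_left (v₀ : V) {i : ℕ} (hi : ¬∃ a b : V, G.dist a b = i) (j k : ℕ) :
    G.rwCoeff v₀ i j k = 0 := by
  have : G.gsphere v₀ i = ∅ := by
    ext w; simp only [aux_mem_gsphere, Set.mem_empty_iff_false, iff_false]
    exact fun h => hi ⟨v₀, w, h⟩
  unfold SimpleGraph.rwCoeff
  rw [this, finsum_mem_empty, mul_zero]

lemma aux_rwCoeff_eq_zero_mid (v₀ : V) {j : ℕ} (hj : ¬∃ a b : V, G.dist a b = j) (i k : ℕ) :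
    G.rwCoeff v₀ i j k = 0 := by
  unfold SimpleGraph.rwCoeff
  rw [finsum_mem_of_eqOn_zero (fun v _ => ?_), mul_zero]
  have : G.gsphere v j = ∅ := by
    ext w; simp only [aux_mem_gsphere, Set.mem_empty_iff_false, iff_false]
    exact fun h => hj ⟨v, w, h⟩
  rw [this]; simp

lemma aux_rwCoeff_eq_zero_right (v₀ : V) {k : ℕ} (hk : ¬∃ a b : V, G.dist a b = k) (i j : ℕ) :
    G.rwCoeff v₀ i j k = 0 := by
  refine aux_rwCoeff_eq_zero_of_inter v₀ (fun v _ => ?_)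
  ext w; simp only [Set.mem_inter_iff, aux_mem_gsphere, Set.mem_empty_iff_false, iff_false]
  rintro ⟨-, h⟩; exact hk ⟨v₀, w, h⟩

lemma aux_rwCoeff_eq_zero_of_lt (hc : G.Connected) (v₀ : V) {i j k : ℕ} (hk : i + j < k) :
    G.rwCoeff v₀ i j k = 0 := by
  refine aux_rwCoeff_eq_zero_of_inter v₀ (fun v hv => ?_)
  ext w
  simp only [Set.mem_inter_iff, aux_mem_gsphere, Set.mem_empty_iff_false, iff_false]
  rintro ⟨h1, h2⟩
  have := hc.dist_triangle (u := v₀) (v := v) (w := w)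
  rw [aux_mem_gsphere] at hv; omega

lemma aux_rwCoeff_eq_zero_of_mid_gt (hc : G.Connected) (v₀ : V) {i j k : ℕ} (hj : i + k < j) :
    G.rwCoeff v₀ i j k = 0 := by
  refine aux_rwCoeff_eq_zero_of_inter v₀ (fun v hv => ?_)
  ext w
  simp only [Set.mem_inter_iff, aux_mem_gsphere, Set.mem_empty_iff_false, iff_false]
  rintro ⟨h1, h2⟩
  have := hc.dist_triangle (u := v) (v := v₀) (w := w)
  rw [aux_mem_gsphere] at hv
  rw [G.dist_comm (u := v) (v := v₀)] at this; omega

lemma aux_rwCoeff_eq_zero_of_left_gt (hc : G.Connected) (v₀ : V) {i j k : ℕ} (hi : j + k < i) :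
    G.rwCoeff v₀ i j k = 0 := by
  refine aux_rwCoeff_eq_zero_of_inter v₀ (fun v hv => ?_)
  ext w
  simp only [Set.mem_inter_iff, aux_mem_gsphere, Set.mem_empty_iff_false, iff_false]
  rintro ⟨h1, h2⟩
  have := hc.dist_triangle (u := v₀) (v := w) (w := v)
  rw [aux_mem_gsphere] at hv
  rw [G.dist_comm (u := w) (v := v)] at this; omega

lemma aux_gsphere_zero (hc : G.Connected) (v₀ : V) : G.gsphere v₀ 0 = {v₀} := by
  ext w
  simp only [aux_mem_gsphere, Set.mem_singleton_iff]
  rw [hc.dist_eq_zero_iff, eq_comm]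

lemma aux_rwCoeff_zero_left_ne (hc : G.Connected) (v₀ : V) {j k : ℕ} (h : j ≠ k) :
    G.rwCoeff v₀ 0 j k = 0 := by
  refine aux_rwCoeff_eq_zero_of_inter v₀ (fun v hv => ?_)
  rw [aux_gsphere_zero hc] at hv
  subst hv
  ext w
  simp only [Set.mem_inter_iff, aux_mem_gsphere, Set.mem_empty_iff_false, iff_false]
  rintro ⟨h1, h2⟩; exact h (h1 ▸ h2 ▸ rfl)

lemma aux_rwCoeff_zero_left_eq (hc : G.Connected) (hlf : ∀ v : V, (G.neighborSet v).Finite)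
    (v₀ : V) {j : ℕ} (hne : (G.gsphere v₀ j).Nonempty) :
    G.rwCoeff v₀ 0 j j = 1 := by
  unfold SimpleGraph.rwCoeff
  rw [aux_gsphere_zero hc, finsum_mem_singleton, Set.inter_self, Set.ncard_singleton]
  have hpos : (0 : ℝ) < ((G.gsphere v₀ j).ncard : ℝ) := by
    exact_mod_cast (Set.ncard_pos (aux_gsphere_finite hc hlf v₀ j)).mpr hne
  field_simp
  norm_num

lemma aux_rwCoeff_one_pos (hc : G.Connected) (hlf : ∀ v : V, (G.neighborSet v).Finite)
    (hwd : ∀ (v : V) (j : ℕ), (∃ a b : V, G.dist a b = j) → (G.gsphere v j).Nonempty)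
    (v₀ : V) {m : ℕ} (hval : ∃ a b : V, G.dist a b = m + 1) :
    0 < G.rwCoeff v₀ 1 m (m + 1) := by
  have h1 : ∃ a b : V, G.dist a b = 1 := by
    obtain ⟨a, b, hab⟩ := hval
    obtain ⟨u, hu, -⟩ := aux_exists_dist_one_adj hc hab
    exact ⟨a, u, hu⟩
  have hs1 : (G.gsphere v₀ 1).Nonempty := hwd v₀ 1 h1
  have hfin1 := aux_gsphere_finite hc hlf v₀ 1
  obtain ⟨w, hw⟩ := hwd v₀ (m + 1) hval
  have hw' : G.dist v₀ w = m + 1 := hw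
  obtain ⟨v, hv1, hvm⟩ := aux_exists_dist_one_adj hc hw'
  unfold SimpleGraph.rwCoeff
  refine mul_pos ?_ ?_
  · rw [one_div]
    exact inv_pos.mpr (by exact_mod_cast (Set.ncard_pos hfin1).mpr hs1)
  · rw [finsum_mem_eq_finite_toFinset_sum _ hfin1]
    refine Finset.sum_pos' (fun x _ => by positivity) ⟨v, ?_, ?_⟩
    · rw [Set.Finite.mem_toFinset]; exact hv1
    · refine div_pos ?_ ?_
      · have hfin : (G.gsphere v m ∩ G.gsphere v₀ (m + 1)).Finite :=
          Set.Finite.inter_of_left (aux_gsphere_finite hc hlf v m) _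
        exact_mod_cast (Set.ncard_pos hfin).mpr ⟨w, hvm, hw⟩
      · exact_mod_cast (Set.ncard_pos (aux_gsphere_finite hc hlf v m)).mpr ⟨w, hvm⟩

end Aux


/-- If the random-walk convolution on the distance relations of a graph (with
self-centered condition and well-defined coefficients) is commutative and
satisfies `(R_1 ∘ R_i) ∘ R_j = R_1 ∘ (R_i ∘ R_j)` for all `i, j`, then it is
associative on all basis elements: `(R_h ∘ R_i) ∘ R_j = R_h ∘ (R_i ∘ R_j)`,
expressed on the coefficient of each `R_k`. -/
theorem rwCoeff_assoc_of_comm_and_one (G : SimpleGraph V) (hc : G.Connected)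
    (hlf : ∀ v : V, (G.neighborSet v).Finite) (hsc : G.SelfCenteredCond)
    (v₀ : V)
    (hwd : ∀ (v : V) (j : ℕ), (∃ a b : V, G.dist a b = j) →
      (G.gsphere v j).Nonempty)
    (hcomm : ∀ i j k : ℕ, G.rwCoeff v₀ i j k = G.rwCoeff v₀ j i k)
    (hone : ∀ i j k : ℕ,
      (∑ᶠ l : ℕ, G.rwCoeff v₀ 1 i l * G.rwCoeff v₀ l j k) =
        ∑ᶠ l : ℕ, G.rwCoeff v₀ i j l * G.rwCoeff v₀ 1 l k) :
    ∀ h i j k : ℕ,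
      (∑ᶠ l : ℕ, G.rwCoeff v₀ h i l * G.rwCoeff v₀ l j k) =
        ∑ᶠ l : ℕ, G.rwCoeff v₀ i j l * G.rwCoeff v₀ h l k := by
  classical
  suffices main : ∀ h : ℕ,
      (∀ i j k : ℕ, (∑ᶠ l : ℕ, G.rwCoeff v₀ h i l * G.rwCoeff v₀ l j k) =
        ∑ᶠ l : ℕ, G.rwCoeff v₀ i j l * G.rwCoeff v₀ h l k) ∧
      (∀ i j k : ℕ, (∑ᶠ l : ℕ, G.rwCoeff v₀ (h + 1) i l * G.rwCoeff v₀ l j k) =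
        ∑ᶠ l : ℕ, G.rwCoeff v₀ i j l * G.rwCoeff v₀ (h + 1) l k) by
    intro h i j k; exact (main h).1 i j k
  intro h
  induction h with
  | zero =>
    constructor
    · intro i j k
      by_cases hk : ∃ a b : V, G.dist a b = k
      · by_cases hi : ∃ a b : V, G.dist a b = i
        · have hL : (∑ᶠ l : ℕ, G.rwCoeff v₀ 0 i l * G.rwCoeff v₀ l j k) =
              G.rwCoeff v₀ 0 i i * G.rwCoeff v₀ i j k := by
            rw [finsum_eq_sum_of_support_subset _ (s := {i}) ?_, Finset.sum_singleton]
            intro l hl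
            simp only [Function.mem_support] at hl
            simp only [Finset.coe_singleton, Set.mem_singleton_iff]
            by_contra hne
            exact hl (by
              rw [aux_rwCoeff_zero_left_ne hc v₀ (fun he => hne he.symm), zero_mul])
          have hR : (∑ᶠ l : ℕ, G.rwCoeff v₀ i j l * G.rwCoeff v₀ 0 l k) =
              G.rwCoeff v₀ i j k * G.rwCoeff v₀ 0 k k := by
            rw [finsum_eq_sum_of_support_subset _ (s := {k}) ?_, Finset.sum_singleton]
            intro l hl
            simp only [Function.mem_support] at hl
            simp only [Finset.coe_singleton, Set.mem_singleton_iff]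
            by_contra hne
            exact hl (by rw [aux_rwCoeff_zero_left_ne hc v₀ hne, mul_zero])
          rw [hL, hR, aux_rwCoeff_zero_left_eq hc hlf v₀ (hwd v₀ i hi),
            aux_rwCoeff_zero_left_eq hc hlf v₀ (hwd v₀ k hk), one_mul, mul_one]
        · have hLz : ∀ l : ℕ, G.rwCoeff v₀ 0 i l * G.rwCoeff v₀ l j k = 0 := fun l => by
            rw [aux_rwCoeff_eq_zero_mid v₀ hi, zero_mul]
          have hRz : ∀ l : ℕ, G.rwCoeff v₀ i j l * G.rwCoeff v₀ 0 l k = 0 := fun l => by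
            rw [aux_rwCoeff_eq_zero_left v₀ hi, zero_mul]
          rw [finsum_congr hLz, finsum_congr hRz]
      · have hLz : ∀ l : ℕ, G.rwCoeff v₀ 0 i l * G.rwCoeff v₀ l j k = 0 := fun l => by
          rw [aux_rwCoeff_eq_zero_right v₀ hk, mul_zero]
        have hRz : ∀ l : ℕ, G.rwCoeff v₀ i j l * G.rwCoeff v₀ 0 l k = 0 := fun l => by
          rw [aux_rwCoeff_eq_zero_right v₀ hk, mul_zero]
        rw [finsum_congr hLz, finsum_congr hRz]
    · exact hone
  | succ n ih =>
    refine ⟨ih.2, ?_⟩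
    intro i j k
    show (∑ᶠ l : ℕ, G.rwCoeff v₀ (n + 2) i l * G.rwCoeff v₀ l j k) =
      ∑ᶠ l : ℕ, G.rwCoeff v₀ i j l * G.rwCoeff v₀ (n + 2) l k
    by_cases hval : ∃ a b : V, G.dist a b = n + 2
    case neg =>
      have hLz : ∀ l : ℕ, G.rwCoeff v₀ (n + 2) i l * G.rwCoeff v₀ l j k = 0 := fun l => by
        rw [aux_rwCoeff_eq_zero_left v₀ hval, zero_mul]
      have hRz : ∀ l : ℕ, G.rwCoeff v₀ i j l * G.rwCoeff v₀ (n + 2) l k = 0 := fun l => by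
        rw [aux_rwCoeff_eq_zero_left v₀ hval, mul_zero]
      rw [finsum_congr hLz, finsum_congr hRz]
    case pos =>
      set N : ℕ := n + i + j + k + 10 with hNdef
      -- helper 1 : sums of shape `P a b m * P m c' k'`
      have helper1 : ∀ a b c' k' : ℕ, (a + b + 1 ≤ N ∨ c' + k' + 1 ≤ N) →
          (∑ᶠ m : ℕ, G.rwCoeff v₀ a b m * G.rwCoeff v₀ m c' k') =
            ∑ m ∈ Finset.range N, G.rwCoeff v₀ a b m * G.rwCoeff v₀ m c' k' := by
        intro a b c' k' hbound
        refine finsum_eq_sum_of_support_subset _ ?_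
        intro m hm
        simp only [Function.mem_support] at hm
        simp only [Finset.coe_range, Set.mem_Iio]
        by_contra hge; push_neg at hge
        rcases hbound with hb | hb
        · exact hm (by rw [aux_rwCoeff_eq_zero_of_lt hc v₀ (show a + b < m by omega), zero_mul])
        · exact hm (by
            rw [aux_rwCoeff_eq_zero_of_left_gt hc v₀ (show c' + k' < m by omega), mul_zero])
      -- helper 2 : sums of shape `P a b m * P c' m k'`
      have helper2 : ∀ a b c' k' : ℕ, (a + b + 1 ≤ N ∨ c' + k' + 1 ≤ N) →
          (∑ᶠ m : ℕ, G.rwCoeff v₀ a b m * G.rwCoeff v₀ c' m k') =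
            ∑ m ∈ Finset.range N, G.rwCoeff v₀ a b m * G.rwCoeff v₀ c' m k' := by
        intro a b c' k' hbound
        refine finsum_eq_sum_of_support_subset _ ?_
        intro m hm
        simp only [Function.mem_support] at hm
        simp only [Finset.coe_range, Set.mem_Iio]
        by_contra hge; push_neg at hge
        rcases hbound with hb | hb
        · exact hm (by rw [aux_rwCoeff_eq_zero_of_lt hc v₀ (show a + b < m by omega), zero_mul])
        · exact hm (by
            rw [aux_rwCoeff_eq_zero_of_mid_gt hc v₀ (show c' + k' < m by omega), mul_zero])
      have hcpos : 0 < G.rwCoeff v₀ 1 (n + 1) (n + 2) :=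
        aux_rwCoeff_one_pos hc hlf hwd v₀ (m := n + 1) hval
      -- expansion of `R_1 ∘ R_{n+1}`
      have expand3 : ∀ X : ℕ → ℝ,
          (∑ᶠ m : ℕ, G.rwCoeff v₀ 1 (n + 1) m * X m) =
            G.rwCoeff v₀ 1 (n + 1) n * X n + G.rwCoeff v₀ 1 (n + 1) (n + 1) * X (n + 1) +
              G.rwCoeff v₀ 1 (n + 1) (n + 2) * X (n + 2) := by
        intro X
        have hsub : (Function.support fun m => G.rwCoeff v₀ 1 (n + 1) m * X m) ⊆
            ↑({n, n + 1, n + 2} : Finset ℕ) := by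
          intro m hm
          simp only [Function.mem_support] at hm
          simp only [Finset.coe_insert, Finset.coe_singleton, Set.mem_insert_iff,
            Set.mem_singleton_iff]
          by_contra hmem; push_neg at hmem
          obtain ⟨h1, h2, h3⟩ := hmem
          rcases Nat.lt_or_ge m n with hlt | hge
          · exact hm (by
              rw [aux_rwCoeff_eq_zero_of_mid_gt hc v₀ (show 1 + m < n + 1 by omega), zero_mul])
          · exact hm (by
              rw [aux_rwCoeff_eq_zero_of_lt hc v₀ (show 1 + (n + 1) < m by omega), zero_mul])
        rw [finsum_eq_sum_of_support_subset _ hsub]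
        rw [show ({n, n + 1, n + 2} : Finset ℕ) = insert n (insert (n + 1) {n + 2}) from rfl]
        rw [Finset.sum_insert (by
            simp only [Finset.mem_insert, Finset.mem_singleton]; omega),
          Finset.sum_insert (by simp only [Finset.mem_singleton]; omega),
          Finset.sum_singleton]
        ring
      -- the key linear relation
      have E1 : ∀ i' m : ℕ,
          G.rwCoeff v₀ 1 (n + 1) (n + 2) * G.rwCoeff v₀ (n + 2) i' m =
            (∑ᶠ l : ℕ, G.rwCoeff v₀ (n + 1) i' l * G.rwCoeff v₀ 1 l m) -
              G.rwCoeff v₀ 1 (n + 1) n * G.rwCoeff v₀ n i' m -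
              G.rwCoeff v₀ 1 (n + 1) (n + 1) * G.rwCoeff v₀ (n + 1) i' m := by
        intro i' m
        have h := hone (n + 1) i' m
        have h3 : (∑ᶠ l : ℕ, G.rwCoeff v₀ 1 (n + 1) l * G.rwCoeff v₀ l i' m) =
            G.rwCoeff v₀ 1 (n + 1) n * G.rwCoeff v₀ n i' m +
              G.rwCoeff v₀ 1 (n + 1) (n + 1) * G.rwCoeff v₀ (n + 1) i' m +
              G.rwCoeff v₀ 1 (n + 1) (n + 2) * G.rwCoeff v₀ (n + 2) i' m :=
          expand3 fun l => G.rwCoeff v₀ l i' m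
        linarith [h, h3]
      rw [helper1 (n + 2) i j k (Or.inl (by omega)), helper2 i j (n + 2) k (Or.inl (by omega))]
      refine mul_left_cancel₀ (ne_of_gt hcpos) ?_
      calc G.rwCoeff v₀ 1 (n + 1) (n + 2) *
            ∑ l ∈ Finset.range N, G.rwCoeff v₀ (n + 2) i l * G.rwCoeff v₀ l j k
          = ∑ l ∈ Finset.range N,
              ((∑ m ∈ Finset.range N, G.rwCoeff v₀ (n + 1) i m * G.rwCoeff v₀ 1 m l) -
                G.rwCoeff v₀ 1 (n + 1) n * G.rwCoeff v₀ n i l -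
                G.rwCoeff v₀ 1 (n + 1) (n + 1) * G.rwCoeff v₀ (n + 1) i l) *
                G.rwCoeff v₀ l j k := by
            rw [Finset.mul_sum]
            refine Finset.sum_congr rfl fun l _ => ?_
            rw [← mul_assoc, E1 i l, helper2 (n + 1) i 1 l (Or.inl (by omega))]
        _ = (∑ l ∈ Finset.range N, ∑ m ∈ Finset.range N,
              G.rwCoeff v₀ (n + 1) i m * (G.rwCoeff v₀ 1 m l * G.rwCoeff v₀ l j k)) -
            G.rwCoeff v₀ 1 (n + 1) n *
              ∑ l ∈ Finset.range N, G.rwCoeff v₀ n i l * G.rwCoeff v₀ l j k -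
            G.rwCoeff v₀ 1 (n + 1) (n + 1) *
              ∑ l ∈ Finset.range N, G.rwCoeff v₀ (n + 1) i l * G.rwCoeff v₀ l j k := by
            simp only [sub_mul, Finset.sum_sub_distrib, Finset.sum_mul, Finset.mul_sum, mul_assoc]
        _ = (∑ m ∈ Finset.range N, G.rwCoeff v₀ (n + 1) i m *
              ∑ l ∈ Finset.range N, G.rwCoeff v₀ 1 m l * G.rwCoeff v₀ l j k) -
            G.rwCoeff v₀ 1 (n + 1) n *
              ∑ l ∈ Finset.range N, G.rwCoeff v₀ i j l * G.rwCoeff v₀ n l k -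
            G.rwCoeff v₀ 1 (n + 1) (n + 1) *
              ∑ l ∈ Finset.range N, G.rwCoeff v₀ i j l * G.rwCoeff v₀ (n + 1) l k := by
            have hA : (∑ l ∈ Finset.range N, G.rwCoeff v₀ n i l * G.rwCoeff v₀ l j k) =
                ∑ l ∈ Finset.range N, G.rwCoeff v₀ i j l * G.rwCoeff v₀ n l k := by
              rw [← helper1 n i j k (Or.inl (by omega)),
                ← helper2 i j n k (Or.inl (by omega)), ih.1 i j k]
            have hB : (∑ l ∈ Finset.range N, G.rwCoeff v₀ (n + 1) i l * G.rwCoeff v₀ l j k) =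
                ∑ l ∈ Finset.range N, G.rwCoeff v₀ i j l * G.rwCoeff v₀ (n + 1) l k := by
              rw [← helper1 (n + 1) i j k (Or.inl (by omega)),
                ← helper2 i j (n + 1) k (Or.inl (by omega)), ih.2 i j k]
            rw [hA, hB, Finset.sum_comm]
            simp only [Finset.mul_sum]
        _ = (∑ m ∈ Finset.range N, G.rwCoeff v₀ (n + 1) i m *
              ∑ l ∈ Finset.range N, G.rwCoeff v₀ m j l * G.rwCoeff v₀ 1 l k) -
            G.rwCoeff v₀ 1 (n + 1) n *
              ∑ l ∈ Finset.range N, G.rwCoeff v₀ i j l * G.rwCoeff v₀ n l k -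
            G.rwCoeff v₀ 1 (n + 1) (n + 1) *
              ∑ l ∈ Finset.range N, G.rwCoeff v₀ i j l * G.rwCoeff v₀ (n + 1) l k := by
            have hmid : ∀ m : ℕ,
                (∑ l ∈ Finset.range N, G.rwCoeff v₀ 1 m l * G.rwCoeff v₀ l j k) =
                  ∑ l ∈ Finset.range N, G.rwCoeff v₀ m j l * G.rwCoeff v₀ 1 l k := fun m => by
              rw [← helper1 1 m j k (Or.inr (by omega)),
                ← helper2 m j 1 k (Or.inr (by omega)), hone m j k]
            simp only [hmid]
        _ = (∑ l ∈ Finset.range N,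
              (∑ m ∈ Finset.range N, G.rwCoeff v₀ (n + 1) i m * G.rwCoeff v₀ m j l) *
                G.rwCoeff v₀ 1 l k) -
            G.rwCoeff v₀ 1 (n + 1) n *
              ∑ l ∈ Finset.range N, G.rwCoeff v₀ i j l * G.rwCoeff v₀ n l k -
            G.rwCoeff v₀ 1 (n + 1) (n + 1) *
              ∑ l ∈ Finset.range N, G.rwCoeff v₀ i j l * G.rwCoeff v₀ (n + 1) l k := by
            have hswap : (∑ m ∈ Finset.range N, G.rwCoeff v₀ (n + 1) i m *
                ∑ l ∈ Finset.range N, G.rwCoeff v₀ m j l * G.rwCoeff v₀ 1 l k) =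
                ∑ l ∈ Finset.range N,
                  (∑ m ∈ Finset.range N, G.rwCoeff v₀ (n + 1) i m * G.rwCoeff v₀ m j l) *
                    G.rwCoeff v₀ 1 l k := by
              simp only [Finset.mul_sum, Finset.sum_mul]
              rw [Finset.sum_comm]
              simp only [mul_assoc]
            rw [hswap]
        _ = (∑ l ∈ Finset.range N,
              (∑ m ∈ Finset.range N, G.rwCoeff v₀ i j m * G.rwCoeff v₀ (n + 1) m l) *
                G.rwCoeff v₀ 1 l k) -
            G.rwCoeff v₀ 1 (n + 1) n *
              ∑ l ∈ Finset.range N, G.rwCoeff v₀ i j l * G.rwCoeff v₀ n l k -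
            G.rwCoeff v₀ 1 (n + 1) (n + 1) *
              ∑ l ∈ Finset.range N, G.rwCoeff v₀ i j l * G.rwCoeff v₀ (n + 1) l k := by
            have hih : ∀ l : ℕ,
                (∑ m ∈ Finset.range N, G.rwCoeff v₀ (n + 1) i m * G.rwCoeff v₀ m j l) =
                  ∑ m ∈ Finset.range N, G.rwCoeff v₀ i j m * G.rwCoeff v₀ (n + 1) m l :=
              fun l => by
                rw [← helper1 (n + 1) i j l (Or.inl (by omega)),
                  ← helper2 i j (n + 1) l (Or.inl (by omega)), ih.2 i j l]
            simp only [hih]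
        _ = (∑ m ∈ Finset.range N, G.rwCoeff v₀ i j m *
              (G.rwCoeff v₀ 1 (n + 1) n * G.rwCoeff v₀ n m k +
                G.rwCoeff v₀ 1 (n + 1) (n + 1) * G.rwCoeff v₀ (n + 1) m k +
                G.rwCoeff v₀ 1 (n + 1) (n + 2) * G.rwCoeff v₀ (n + 2) m k)) -
            G.rwCoeff v₀ 1 (n + 1) n *
              ∑ l ∈ Finset.range N, G.rwCoeff v₀ i j l * G.rwCoeff v₀ n l k -
            G.rwCoeff v₀ 1 (n + 1) (n + 1) *
              ∑ l ∈ Finset.range N, G.rwCoeff v₀ i j l * G.rwCoeff v₀ (n + 1) l k := by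
            have hswap2 : (∑ l ∈ Finset.range N,
                (∑ m ∈ Finset.range N, G.rwCoeff v₀ i j m * G.rwCoeff v₀ (n + 1) m l) *
                  G.rwCoeff v₀ 1 l k) =
                ∑ m ∈ Finset.range N, G.rwCoeff v₀ i j m *
                  ∑ l ∈ Finset.range N, G.rwCoeff v₀ (n + 1) m l * G.rwCoeff v₀ 1 l k := by
              simp only [Finset.mul_sum, Finset.sum_mul]
              rw [Finset.sum_comm]
              simp only [mul_assoc]
            have hmid2 : ∀ m : ℕ,
                (∑ l ∈ Finset.range N, G.rwCoeff v₀ (n + 1) m l * G.rwCoeff v₀ 1 l k) =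
                  G.rwCoeff v₀ 1 (n + 1) n * G.rwCoeff v₀ n m k +
                    G.rwCoeff v₀ 1 (n + 1) (n + 1) * G.rwCoeff v₀ (n + 1) m k +
                    G.rwCoeff v₀ 1 (n + 1) (n + 2) * G.rwCoeff v₀ (n + 2) m k := fun m => by
              rw [← helper2 (n + 1) m 1 k (Or.inr (by omega)), ← hone (n + 1) m k]
              exact expand3 fun l => G.rwCoeff v₀ l m k
            rw [hswap2]
            simp only [hmid2]
        _ = G.rwCoeff v₀ 1 (n + 1) (n + 2) *
              ∑ l ∈ Finset.range N, G.rwCoeff v₀ i j l * G.rwCoeff v₀ (n + 2) l k := by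
            have hpt : ∀ m : ℕ, G.rwCoeff v₀ i j m *
                (G.rwCoeff v₀ 1 (n + 1) n * G.rwCoeff v₀ n m k +
                  G.rwCoeff v₀ 1 (n + 1) (n + 1) * G.rwCoeff v₀ (n + 1) m k +
                  G.rwCoeff v₀ 1 (n + 1) (n + 2) * G.rwCoeff v₀ (n + 2) m k) =
                G.rwCoeff v₀ 1 (n + 1) n * (G.rwCoeff v₀ i j m * G.rwCoeff v₀ n m k) +
                  G.rwCoeff v₀ 1 (n + 1) (n + 1) *
                    (G.rwCoeff v₀ i j m * G.rwCoeff v₀ (n + 1) m k) +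
                  G.rwCoeff v₀ 1 (n + 1) (n + 2) *
                    (G.rwCoeff v₀ i j m * G.rwCoeff v₀ (n + 2) m k) := fun m => by ring
            simp only [hpt, Finset.sum_add_distrib, ← Finset.mul_sum]
            ring
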